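/- (Tail bound for the k-th eigenvalue of a single random Hermitian matrix) Let X be a random n×n complex Hermitian matrix (defined on a probability space, with all relevant expectations finite), let k ∈ {1,…,n}, and let θ ∈ ℝ. Then Pr(λ_k(X) ≥ θ) ≤ inf_{t>0} min_V [ e^{−tθ} · E Tr exp( t · V^H X V ) ], where the minimum is over all n×(n−k+1) complex matrices V with V^H V = I_{n−k+1}. -/

import Mathlib

open Matrix MeasureTheory ProbabilityTheory

/-- The `k`-th largest element (1-indexed) of the values of `f : Fin n → ℝ`,
counted with multiplicity. -/
noncomputable def kthLargest {n : ℕ} (f : Fin n → ℝ) (k : ℕ) : ℝ :=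
  (Multiset.sort (Finset.univ.val.map f) (· ≤ ·)).getD (n - k) 0

/-- The `k`-th largest eigenvalue (1-indexed, non-increasing order, with multiplicity)
of a Hermitian matrix; junk value `0` for non-Hermitian matrices. -/
noncomputable def eigvalDesc {n : ℕ} (A : Matrix (Fin n) (Fin n) ℂ) (k : ℕ) : ℝ :=
  if h : A.IsHermitian then kthLargest h.eigenvalues k else 0

/-- The matrix exponential. -/
noncomputable def matExp {n : ℕ} (A : Matrix (Fin n) (Fin n) ℂ) : Matrix (Fin n) (Fin n) ℂ :=
  NormedSpace.exp A

section AuxLemmas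

lemma card_filter_kthLargest {n k : ℕ} (f : Fin n → ℝ) (hk1 : 1 ≤ k) (hkn : k ≤ n) :
    k ≤ (Finset.univ.filter fun i => kthLargest f k ≤ f i).card := by
  classical
  set l := Multiset.sort (Finset.univ.val.map f) (· ≤ ·) with hl
  have hlen : l.length = n := by
    rw [hl, Multiset.length_sort]
    simp
  have hsorted : l.Pairwise (· ≤ ·) := Multiset.pairwise_sort _ _
  have hidx : n - k < l.length := by omega
  have hv : kthLargest f k = l[n - k] := List.getD_eq_getElem l 0 hidx
  have hcard : (Finset.univ.filter fun i => kthLargest f k ≤ f i).card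
      = List.countP (fun x => decide (kthLargest f k ≤ x)) l := by
    have h1 : (Finset.univ.filter fun i => kthLargest f k ≤ f i).card
        = Multiset.countP (fun x => kthLargest f k ≤ x) (Finset.univ.val.map f) := by
      rw [Multiset.countP_map]
      rfl
    rw [h1, show (Finset.univ.val.map f) = ↑l from (Multiset.sort_eq _ _).symm,
      Multiset.coe_countP]
  rw [hcard]
  have hsplit : l = l.take (n - k) ++ l.drop (n - k) := (List.take_append_drop _ _).symm
  have hdropall : ∀ x ∈ l.drop (n - k), (fun x => decide (kthLargest f k ≤ x)) x = true := by
    intro x hx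
    obtain ⟨j, hj, rfl⟩ := List.mem_iff_getElem.1 hx
    rw [List.getElem_drop]
    simp only [decide_eq_true_eq, hv]
    by_cases hj0 : j = 0
    · subst hj0; simp
    · have hd : j < l.length - (n - k) := by
        have := hj; rwa [List.length_drop] at this
      exact (List.pairwise_iff_getElem.1 hsorted) _ _ hidx (by omega) (by omega)
  have hdlen : (l.drop (n - k)).length = k := by rw [List.length_drop]; omega
  calc k = List.countP (fun x => decide (kthLargest f k ≤ x)) (l.drop (n - k)) := by
        rw [List.countP_eq_length.2 hdropall, hdlen]
    _ ≤ _ := by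
        conv_rhs => rw [hsplit]
        rw [List.countP_append]
        omega

lemma dot_transfer {n m : ℕ} (W : Matrix (Fin n) (Fin m) ℂ) (M : Matrix (Fin n) (Fin n) ℂ)
    (y : Fin m → ℂ) :
    star (W *ᵥ y) ⬝ᵥ (M *ᵥ (W *ᵥ y)) = star y ⬝ᵥ ((Wᴴ * M * W) *ᵥ y) := by
  simp only [star_mulVec, mulVec_mulVec, dotProduct_mulVec, vecMul_vecMul]
  rw [Matrix.mul_assoc]

lemma re_dot_diagonal {m : ℕ} (d : Fin m → ℝ) (y : Fin m → ℂ) :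
    (star y ⬝ᵥ ((diagonal (fun i => (d i : ℂ))) *ᵥ y)).re
      = ∑ i, d i * Complex.normSq (y i) := by
  simp only [dotProduct, mulVec_diagonal, Complex.re_sum, Pi.star_apply]
  refine Finset.sum_congr rfl fun i _ => ?_
  have : star (y i) * ((d i : ℂ) * y i) = ((d i : ℝ) : ℂ) * ((Complex.normSq (y i) : ℝ) : ℂ) := by
    rw [Complex.normSq_eq_conj_mul_self, RCLike.star_def]; ring
  rw [this, ← Complex.ofReal_mul, Complex.ofReal_re]

lemma re_dot_self {m : ℕ} (y : Fin m → ℂ) :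
    (star y ⬝ᵥ y).re = ∑ i, Complex.normSq (y i) := by
  simp only [dotProduct, Complex.re_sum, Pi.star_apply]
  refine Finset.sum_congr rfl fun i _ => ?_
  rw [RCLike.star_def, ← Complex.normSq_eq_conj_mul_self, Complex.ofReal_re]

lemma re_dot_self_pos {m : ℕ} {y : Fin m → ℂ} (hy : y ≠ 0) : 0 < (star y ⬝ᵥ y).re := by
  rw [re_dot_self]
  obtain ⟨i, hi⟩ := Function.ne_iff.1 hy
  exact Finset.sum_pos' (fun j _ => Complex.normSq_nonneg _)
    ⟨i, Finset.mem_univ i, by simpa [Complex.normSq_pos] using hi⟩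

lemma exists_common_nonzero {n a b : ℕ} (W : Matrix (Fin n) (Fin a) ℂ)
    (V : Matrix (Fin n) (Fin b) ℂ) (hW : Wᴴ * W = 1) (hV : Vᴴ * V = 1) (hab : n < a + b) :
    ∃ (y : Fin a → ℂ) (z : Fin b → ℂ), W *ᵥ y = V *ᵥ z ∧ W *ᵥ y ≠ 0 := by
  have inj : ∀ {c : ℕ} (M : Matrix (Fin n) (Fin c) ℂ), Mᴴ * M = 1 →
      Function.Injective M.mulVecLin := by
    intro c M hM u v huv
    have h2 := congrArg (Mᴴ.mulVecLin) huv
    simpa [Matrix.mulVecLin_apply, mulVec_mulVec, hM] using h2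
  set SW := LinearMap.range W.mulVecLin
  set SV := LinearMap.range V.mulVecLin
  have h1 : Module.finrank ℂ SW = a := by
    rw [LinearMap.finrank_range_of_inj (inj W hW), Module.finrank_fin_fun]
  have h2 : Module.finrank ℂ SV = b := by
    rw [LinearMap.finrank_range_of_inj (inj V hV), Module.finrank_fin_fun]
  have hsup : Module.finrank ℂ ↥(SW ⊔ SV) ≤ n := by
    have := Submodule.finrank_le (SW ⊔ SV)
    rwa [Module.finrank_fin_fun] at this
  have hinf : 0 < Module.finrank ℂ ↥(SW ⊓ SV) := by
    have := Submodule.finrank_sup_add_finrank_inf_eq SW SV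
    omega
  have hbot : SW ⊓ SV ≠ ⊥ := by
    intro h
    rw [h, finrank_bot] at hinf
    exact lt_irrefl 0 hinf
  obtain ⟨x, hx, hx0⟩ := Submodule.exists_mem_ne_zero_of_ne_bot hbot
  obtain ⟨y, hy⟩ := LinearMap.mem_range.1 hx.1
  obtain ⟨z, hz⟩ := LinearMap.mem_range.1 hx.2
  exact ⟨y, z, by rw [show W *ᵥ y = x from hy, show V *ᵥ z = x from hz],
    by rw [show W *ᵥ y = x from hy]; exact hx0⟩

lemma isHermitian_conj_same {n m : ℕ} {A : Matrix (Fin n) (Fin n) ℂ} (hA : A.IsHermitian)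
    (V : Matrix (Fin n) (Fin m) ℂ) : (Vᴴ * A * V).IsHermitian :=
  Matrix.isHermitian_conjTranspose_mul_mul V hA

lemma star_dec {m : ℕ} {B : Matrix (Fin m) (Fin m) ℂ} (hB : B.IsHermitian) (z : Fin m → ℂ) :
    z = (hB.eigenvectorUnitary : Matrix (Fin m) (Fin m) ℂ) *ᵥ
      ((hB.eigenvectorUnitary : Matrix (Fin m) (Fin m) ℂ)ᴴ *ᵥ z) := by
  rw [mulVec_mulVec, ← Matrix.star_eq_conjTranspose,
    (Matrix.mem_unitaryGroup_iff).mp (hB.eigenvectorUnitary).2, one_mulVec]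

lemma exists_eigen_ge {m : ℕ} {B : Matrix (Fin m) (Fin m) ℂ} (hB : B.IsHermitian)
    {θ r : ℝ} (hr : 0 < r) (z : Fin m → ℂ)
    (hzB : θ * r ≤ (star z ⬝ᵥ (B *ᵥ z)).re) (hz : (star z ⬝ᵥ z).re = r) :
    ∃ i, θ ≤ hB.eigenvalues i := by
  classical
  set U : Matrix (Fin m) (Fin m) ℂ := (hB.eigenvectorUnitary : Matrix (Fin m) (Fin m) ℂ) with hU
  set c := Uᴴ *ᵥ z with hc
  have hdec : z = U *ᵥ c := star_dec hB z
  have hUU : Uᴴ * B * U = diagonal (fun i => ((hB.eigenvalues i : ℝ) : ℂ)) := by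
    have := hB.conjStarAlgAut_star_eigenvectorUnitary
    simp only [Unitary.conjStarAlgAut_star_apply, Unitary.coe_star] at this
    rwa [Matrix.star_eq_conjTranspose] at this
  have hU1 : Uᴴ * U = 1 := by
    rw [← Matrix.star_eq_conjTranspose]
    exact (Matrix.mem_unitaryGroup_iff').mp (hB.eigenvectorUnitary).2
  have hB1 : (star z ⬝ᵥ (B *ᵥ z)).re = ∑ i, hB.eigenvalues i * Complex.normSq (c i) := by
    conv_lhs => rw [hdec]
    rw [dot_transfer, hUU, re_dot_diagonal]
  have hz1 : ∑ i, Complex.normSq (c i) = r := by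
    rw [← hz]
    conv_rhs => rw [hdec]
    rw [show star (U *ᵥ c) ⬝ᵥ (U *ᵥ c) = star (U *ᵥ c) ⬝ᵥ ((1 : Matrix (Fin m) (Fin m) ℂ) *ᵥ (U *ᵥ c)) by rw [one_mulVec],
      dot_transfer, Matrix.mul_one, hU1, one_mulVec, re_dot_self]
  -- m > 0 since r > 0 forces a nonzero coordinate
  have hm : (Finset.univ : Finset (Fin m)).Nonempty := by
    by_contra h
    rw [Finset.not_nonempty_iff_eq_empty] at h
    rw [h, Finset.sum_empty] at hz1
    exact absurd hz1.symm (ne_of_gt hr)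
  obtain ⟨i0, _, hmax⟩ := Finset.exists_max_image Finset.univ hB.eigenvalues hm
  refine ⟨i0, ?_⟩
  have hsum : (∑ i, hB.eigenvalues i * Complex.normSq (c i)) ≤ hB.eigenvalues i0 * r := by
    rw [← hz1, Finset.mul_sum]
    exact Finset.sum_le_sum fun i _ =>
      mul_le_mul_of_nonneg_right (hmax i (Finset.mem_univ i)) (Complex.normSq_nonneg _)
  have : θ * r ≤ hB.eigenvalues i0 * r := le_trans (by rw [← hB1] at hsum ⊢; exact hzB) hsum
  exact le_of_mul_le_mul_right (by simpa [mul_comm] using this) hr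

lemma matExp_def {n : ℕ} (A : Matrix (Fin n) (Fin n) ℂ) : matExp A = NormedSpace.exp A := rfl

lemma trace_matExp_herm {m : ℕ} {B : Matrix (Fin m) (Fin m) ℂ} (hB : B.IsHermitian) (t : ℝ) :
    (Matrix.trace (matExp (t • B))).re = ∑ i, Real.exp (t * hB.eigenvalues i) := by
  classical
  set U : Matrix (Fin m) (Fin m) ℂ := (hB.eigenvectorUnitary : Matrix (Fin m) (Fin m) ℂ) with hUdef
  have h1 : U * star U = 1 := (Matrix.mem_unitaryGroup_iff).mp (hB.eigenvectorUnitary).2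
  have h2 : star U * U = 1 := (Matrix.mem_unitaryGroup_iff').mp (hB.eigenvectorUnitary).2
  set u : (Matrix (Fin m) (Fin m) ℂ)ˣ := ⟨U, star U, h1, h2⟩ with hu
  set D : Matrix (Fin m) (Fin m) ℂ := diagonal (fun i => ((t * hB.eigenvalues i : ℝ) : ℂ)) with hD
  have hdec : t • B = (u : Matrix (Fin m) (Fin m) ℂ) * D *
      ((u⁻¹ : (Matrix (Fin m) (Fin m) ℂ)ˣ) : Matrix (Fin m) (Fin m) ℂ) := by
    have hinv : ((u⁻¹ : (Matrix (Fin m) (Fin m) ℂ)ˣ) : Matrix (Fin m) (Fin m) ℂ) = star U := rfl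
    have hval : ((u : (Matrix (Fin m) (Fin m) ℂ)ˣ) : Matrix (Fin m) (Fin m) ℂ) = U := rfl
    rw [hinv, hval, hD]
    have hdiag : diagonal (fun i => ((t * hB.eigenvalues i : ℝ) : ℂ))
        = t • diagonal (fun i => ((hB.eigenvalues i : ℝ) : ℂ)) := by
      ext i j
      by_cases h : i = j <;>
        simp [h, Matrix.diagonal_apply, Complex.real_smul, Complex.ofReal_mul]
    rw [hdiag, Matrix.mul_smul, Matrix.smul_mul]
    congr 1
    exact hB.spectral_theorem
  rw [matExp_def, hdec, Matrix.exp_units_conj, Matrix.trace_units_conj, hD,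
    Matrix.exp_diagonal, Matrix.trace_diagonal, Complex.re_sum]
  refine Finset.sum_congr rfl fun i _ => ?_
  rw [show (NormedSpace.exp fun i => ((t * hB.eigenvalues i : ℝ) : ℂ)) i
      = NormedSpace.exp ((t * hB.eigenvalues i : ℝ) : ℂ) from Pi.coe_exp _ i]
  rw [← Complex.exp_eq_exp_ℂ, ← Complex.ofReal_exp, Complex.ofReal_re]

lemma submatrix_one_inj {a n : ℕ} (e : Fin a → Fin n) (he : Function.Injective e) :
    (1 : Matrix (Fin n) (Fin n) ℂ).submatrix e e = 1 := by
  ext i j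
  by_cases h : i = j <;> simp [Matrix.submatrix_apply, Matrix.one_apply, he.eq_iff, h]

lemma diagonal_submatrix_inj {a n : ℕ} (d : Fin n → ℂ) (e : Fin a → Fin n)
    (he : Function.Injective e) :
    (diagonal d).submatrix e e = diagonal (fun j => d (e j)) := by
  ext i j
  by_cases h : i = j <;> simp [Matrix.submatrix_apply, Matrix.diagonal_apply, he.eq_iff, h]

lemma conj_submatrix {n a : ℕ} (U M : Matrix (Fin n) (Fin n) ℂ) (e : Fin a → Fin n) :
    (U.submatrix id e)ᴴ * M * (U.submatrix id e) = (Uᴴ * M * U).submatrix e e := by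
  rw [conjTranspose_submatrix]
  have h1 : Uᴴ.submatrix e id * M = (Uᴴ * M).submatrix e id := by
    have := Matrix.submatrix_mul_equiv Uᴴ M e (Equiv.refl (Fin n)) id
    simpa using this
  rw [h1]
  have h2 : (Uᴴ * M).submatrix e id * U.submatrix id e = ((Uᴴ * M) * U).submatrix e e := by
    have := Matrix.submatrix_mul_equiv (Uᴴ * M) U e (Equiv.refl (Fin n)) e
    simpa using this
  rw [h2]

lemma key_pointwise {n k : ℕ} (hk1 : 1 ≤ k) (hkn : k ≤ n)
    {A : Matrix (Fin n) (Fin n) ℂ} (hA : A.IsHermitian)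
    (V : Matrix (Fin n) (Fin (n - k + 1)) ℂ) (hV : Vᴴ * V = 1)
    {t θ : ℝ} (ht : 0 < t) (hθ : θ ≤ kthLargest hA.eigenvalues k) :
    Real.exp (t * θ) ≤ (Matrix.trace (matExp (t • (Vᴴ * A * V)))).re := by
  classical
  set g := hA.eigenvalues with hg
  have hcard := card_filter_kthLargest g hk1 hkn
  obtain ⟨S, hS, hScard⟩ := Finset.exists_subset_card_eq hcard
  set e : Fin k → Fin n := fun j => ((S.orderIsoOfFin hScard) j : Fin n) with he_def
  have he : Function.Injective e := fun i j h => by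
    have := (S.orderIsoOfFin hScard).injective (Subtype.ext h)
    exact this
  have hge : ∀ j, θ ≤ g (e j) := fun j => le_trans hθ (by
    have hmem := hS ((S.orderIsoOfFin hScard) j).2
    exact (Finset.mem_filter.1 hmem).2)
  set U : Matrix (Fin n) (Fin n) ℂ := (hA.eigenvectorUnitary : Matrix (Fin n) (Fin n) ℂ) with hU
  have hUU : Uᴴ * U = 1 := by
    rw [← Matrix.star_eq_conjTranspose]
    exact (Matrix.mem_unitaryGroup_iff').mp (hA.eigenvectorUnitary).2
  have hUAU : Uᴴ * A * U = diagonal (fun i => ((g i : ℝ) : ℂ)) := by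
    have := hA.conjStarAlgAut_star_eigenvectorUnitary
    simp only [Unitary.conjStarAlgAut_star_apply, Unitary.coe_star] at this
    rwa [Matrix.star_eq_conjTranspose] at this
  set W : Matrix (Fin n) (Fin k) ℂ := U.submatrix id e with hWdef
  have hW1 : Wᴴ * W = 1 := by
    rw [hWdef, conjTranspose_submatrix]
    have := Matrix.submatrix_mul_equiv Uᴴ U e (Equiv.refl (Fin n)) e
    simp only [Equiv.coe_refl, Matrix.submatrix_id_id] at this
    rw [this, hUU, submatrix_one_inj e he]
  have hWd : Wᴴ * A * W = diagonal (fun j => ((g (e j) : ℝ) : ℂ)) := by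
    rw [hWdef, conj_submatrix, hUAU, diagonal_submatrix_inj _ e he]
  obtain ⟨y, z, hyz, hne⟩ := exists_common_nonzero W V hW1 hV (by omega)
  have hself : ∀ {c : ℕ} (M : Matrix (Fin n) (Fin c) ℂ) (w : Fin c → ℂ), Mᴴ * M = 1 →
      (star (M *ᵥ w) ⬝ᵥ (M *ᵥ w)).re = ∑ i, Complex.normSq (w i) := by
    intro c M w hM
    rw [show star (M *ᵥ w) ⬝ᵥ (M *ᵥ w)
        = star (M *ᵥ w) ⬝ᵥ ((1 : Matrix (Fin n) (Fin n) ℂ) *ᵥ (M *ᵥ w)) by rw [one_mulVec],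
      dot_transfer, Matrix.mul_one, hM, one_mulVec, re_dot_self]
  set r := ∑ j, Complex.normSq (y j) with hrdef
  have hWyr : (star (W *ᵥ y) ⬝ᵥ (W *ᵥ y)).re = r := hself W y hW1
  have hr : 0 < r := by rw [← hWyr]; exact re_dot_self_pos hne
  have hlow : θ * r ≤ (star (W *ᵥ y) ⬝ᵥ (A *ᵥ (W *ᵥ y))).re := by
    rw [dot_transfer, hWd, re_dot_diagonal, hrdef, Finset.mul_sum]
    exact Finset.sum_le_sum fun j _ =>
      mul_le_mul_of_nonneg_right (hge j) (Complex.normSq_nonneg _)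
  have hBh : (Vᴴ * A * V).IsHermitian := isHermitian_conj_same hA V
  have hzB : θ * r ≤ (star z ⬝ᵥ ((Vᴴ * A * V) *ᵥ z)).re := by
    rw [← dot_transfer, ← hyz]
    exact hlow
  have hzr : (star z ⬝ᵥ z).re = r := by
    rw [re_dot_self, ← hself V z hV, ← hyz]
    exact hWyr
  obtain ⟨i, hi⟩ := exists_eigen_ge hBh hr z hzB hzr
  rw [trace_matExp_herm hBh t]
  exact le_trans (Real.exp_le_exp.2 (mul_le_mul_of_nonneg_left hi ht.le))
    (Finset.single_le_sum (f := fun j => Real.exp (t * hBh.eigenvalues j))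
      (fun j _ => (Real.exp_pos _).le) (Finset.mem_univ i))

lemma trace_matExp_nonneg {m : ℕ} {B : Matrix (Fin m) (Fin m) ℂ} (hB : B.IsHermitian) (t : ℝ) :
    0 ≤ (Matrix.trace (matExp (t • B))).re := by
  rw [trace_matExp_herm hB t]
  exact Finset.sum_nonneg fun i _ => (Real.exp_pos _).le

lemma markov_exp_aux {Ω : Type*} [MeasurableSpace Ω] (μ : Measure Ω) [IsProbabilityMeasure μ]
    (f : Ω → ℝ) (hfint : Integrable f μ) (hnn : ∀ ω, 0 ≤ f ω) (c : ℝ)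
    (S : Set Ω) (hsub : ∀ ω ∈ S, Real.exp c ≤ f ω) :
    μ S ≤ ENNReal.ofReal (Real.exp (-c) * ∫ ω, f ω ∂μ) := by
  have h1 : μ S ≤ μ {ω | ENNReal.ofReal (Real.exp c) ≤ ENNReal.ofReal (f ω)} :=
    measure_mono fun ω hω => ENNReal.ofReal_le_ofReal (hsub ω hω)
  have haem : AEMeasurable (fun ω => ENNReal.ofReal (f ω)) μ :=
    ENNReal.measurable_ofReal.comp_aemeasurable hfint.aestronglyMeasurable.aemeasurable
  have h2 := MeasureTheory.meas_ge_le_lintegral_div haem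
    (ε := ENNReal.ofReal (Real.exp c))
    (by simp [ENNReal.ofReal_eq_zero, not_le, Real.exp_pos]) ENNReal.ofReal_ne_top
  have h3 : ∫⁻ ω, ENNReal.ofReal (f ω) ∂μ = ENNReal.ofReal (∫ ω, f ω ∂μ) :=
    (MeasureTheory.ofReal_integral_eq_lintegral_ofReal hfint (ae_of_all μ hnn)).symm
  calc μ S ≤ _ := h1
    _ ≤ (∫⁻ ω, ENNReal.ofReal (f ω) ∂μ) / ENNReal.ofReal (Real.exp c) := h2
    _ = ENNReal.ofReal ((∫ ω, f ω ∂μ) / Real.exp c) := by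
        rw [h3, ENNReal.ofReal_div_of_pos (Real.exp_pos c)]
    _ = ENNReal.ofReal (Real.exp (-c) * ∫ ω, f ω ∂μ) := by
        rw [Real.exp_neg]
        congr 1
        field_simp

lemma exists_isometry {n k : ℕ} (hk1 : 1 ≤ k) (hkn : k ≤ n) :
    Nonempty {V : Matrix (Fin n) (Fin (n - k + 1)) ℂ // Vᴴ * V = 1} := by
  have h : n - k + 1 ≤ n := by omega
  refine ⟨⟨(1 : Matrix (Fin n) (Fin n) ℂ).submatrix id (Fin.castLE h), ?_⟩⟩
  rw [conjTranspose_submatrix, conjTranspose_one]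
  have := Matrix.submatrix_mul_equiv (1 : Matrix (Fin n) (Fin n) ℂ)
    (1 : Matrix (Fin n) (Fin n) ℂ) (Fin.castLE h) (Equiv.refl (Fin n)) (Fin.castLE h)
  simp only [Equiv.coe_refl, Matrix.submatrix_id_id] at this
  rw [this, one_mul]
  exact submatrix_one_inj _ (Fin.castLE_injective h)

end AuxLemmas

/-- Tail bound for the k-th eigenvalue of a single random Hermitian matrix:
`Pr(λ_k(X) ≥ θ) ≤ inf_{t>0} min_{VᴴV = I} e^{−tθ} · E Tr exp(t · Vᴴ X V)`. -/
theorem tail_bound_kth_eigenvalue_single {Ω : Type*} [MeasurableSpace Ω]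
    (μ : Measure Ω) [IsProbabilityMeasure μ]
    {n : ℕ} (X : Ω → Matrix (Fin n) (Fin n) ℂ) (hX : ∀ ω, (X ω).IsHermitian)
    (k : ℕ) (hk1 : 1 ≤ k) (hkn : k ≤ n) (θ : ℝ)
    (hInt : ∀ t : ℝ, 0 < t → ∀ V : Matrix (Fin n) (Fin (n - k + 1)) ℂ, Vᴴ * V = 1 →
      Integrable (fun ω => (Matrix.trace (matExp (t • (Vᴴ * X ω * V)))).re) μ) :
    μ {ω | θ ≤ eigvalDesc (X ω) k} ≤
      ENNReal.ofReal (⨅ t : {t : ℝ // 0 < t},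
        ⨅ V : {V : Matrix (Fin n) (Fin (n - k + 1)) ℂ // Vᴴ * V = 1},
          Real.exp (-(t : ℝ) * θ) *
            ∫ ω, (Matrix.trace (matExp ((t : ℝ) •
              ((V : Matrix (Fin n) (Fin (n - k + 1)) ℂ)ᴴ * X ω *
                (V : Matrix (Fin n) (Fin (n - k + 1)) ℂ))))).re ∂μ) := by
  classical
  haveI : Nonempty {t : ℝ // 0 < t} := ⟨⟨1, one_pos⟩⟩
  haveI : Nonempty {V : Matrix (Fin n) (Fin (n - k + 1)) ℂ // Vᴴ * V = 1} :=
    exists_isometry hk1 hkn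
  rw [ENNReal.ofReal_iInf]
  refine le_iInf fun t => ?_
  rw [ENNReal.ofReal_iInf]
  refine le_iInf fun V => ?_
  have hfint := hInt t.1 t.2 V.1 V.2
  have hnn : ∀ ω, 0 ≤ (Matrix.trace (matExp (t.1 • (V.1ᴴ * X ω * V.1)))).re := fun ω =>
    trace_matExp_nonneg (isHermitian_conj_same (hX ω) V.1) t.1
  have hsub : ∀ ω ∈ {ω | θ ≤ eigvalDesc (X ω) k},
      Real.exp (t.1 * θ) ≤ (Matrix.trace (matExp (t.1 • (V.1ᴴ * X ω * V.1)))).re := by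
    intro ω hω
    have hω' : θ ≤ kthLargest (hX ω).eigenvalues k := by
      have := hω
      simp only [Set.mem_setOf_eq, eigvalDesc, dif_pos (hX ω)] at this
      exact this
    exact key_pointwise hk1 hkn (hX ω) V.1 V.2 t.2 hω'
  have := markov_exp_aux μ _ hfint hnn (t.1 * θ) _ hsub
  rwa [← neg_mul] at this
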